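/- In the dimension cover 𝔇(2n,k) with k ≥ 2n+1, for each j ∈ {1,...,k} and each cube C of 𝔠^j(2n,k), the Euclidean distance from C to 𝔠^j(2n,k) \ C equals δ := min{(k-2n)/(2n), 1/(2n-1)}. In particular cubes of the same colour are at distance at least δ > 0 from each other. -/

import Mathlib

noncomputable section

open Matrix

/-- Euclidean `ℝ^{2n}`. -/
abbrev E2n (n : ℕ) : Type := EuclideanSpace ℝ (Fin (2 * n))

/-- The matrix `M(2n,k)`: upper bidiagonal with diagonal `(k,1,…,1)` and
superdiagonal `(k/(2n), 2n/(2n-1), (2n-1)/(2n-2), …, 3/2)`. -/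
def Mmat (n k : ℕ) : Matrix (Fin (2 * n)) (Fin (2 * n)) ℝ := fun i j =>
  if (j : ℕ) = (i : ℕ) then (if (i : ℕ) = 0 then (k : ℝ) else 1)
  else if (j : ℕ) = (i : ℕ) + 1 then
    (if (i : ℕ) = 0 then (k : ℝ) / (2 * n) else ((2 * n : ℝ) - (i : ℕ) + 1) / ((2 * n : ℝ) - (i : ℕ)))
  else 0

/-- The closed unit cube `[0,1]^{2n}` in Euclidean space. -/
def unitCube (n : ℕ) : Set (E2n n) := {x | ∀ i, x i ∈ Set.Icc (0 : ℝ) 1}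

/-- The base point of the cube of colour `j` (zero-based) at lattice site `v`:
`(j)e₁ + M(2n,k)v`. -/
def cubeBase (n k : ℕ) (j : Fin k) (v : Fin (2 * n) → ℤ) : E2n n :=
  (WithLp.equiv 2 _).symm fun i =>
    (if (i : ℕ) = 0 then ((j : ℕ) : ℝ) else 0) + (Mmat n k).mulVec (fun i' => (v i' : ℝ)) i

/-- The cube of colour `j` at lattice site `v`. -/
def cubeAt (n k : ℕ) (j : Fin k) (v : Fin (2 * n) → ℤ) : Set (E2n n) :=
  (fun x => cubeBase n k j v + x) '' unitCube n

/-- The `j`-th colour `𝔠^j(2n,k)`, the union of its cubes. -/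
def frakC (n k : ℕ) (j : Fin k) : Set (E2n n) :=
  ⋃ v : Fin (2 * n) → ℤ, cubeAt n k j v

/-- Euclidean distance between two subsets. -/
def setDist {α : Type*} [MetricSpace α] (A B : Set α) : ℝ :=
  sInf {d | ∃ a ∈ A, ∃ b ∈ B, d = dist a b}

lemma mmat_mulVec_apply (n k : ℕ) (x : Fin (2*n) → ℝ) (i : Fin (2*n)) :
    (Mmat n k).mulVec x i =
      (if (i:ℕ) = 0 then (k:ℝ) else 1) * x i +
      (if h : (i:ℕ)+1 < 2*n then
        (if (i:ℕ) = 0 then (k:ℝ)/(2*n) else ((2*n:ℝ) - (i:ℕ) + 1)/((2*n:ℝ) - (i:ℕ))) * x ⟨(i:ℕ)+1, h⟩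
      else 0) := by
  classical
  set A : ℝ := if (i:ℕ) = 0 then (k:ℝ) else 1 with hA
  set B : ℝ := if (i:ℕ) = 0 then (k:ℝ)/(2*n) else ((2*n:ℝ) - (i:ℕ) + 1)/((2*n:ℝ) - (i:ℕ)) with hB
  have hsum : (Mmat n k).mulVec x i
      = ∑ j : Fin (2*n), ((if j = i then A * x j else 0) + (if (j:ℕ) = (i:ℕ)+1 then B * x j else 0)) := by
    unfold Matrix.mulVec dotProduct Mmat
    refine Finset.sum_congr rfl fun j _ => ?_
    rcases eq_or_ne (j:ℕ) (i:ℕ) with h1 | h1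
    · have hj : j = i := Fin.ext h1
      subst hj
      have h2 : ¬ ((j:ℕ) = (j:ℕ)+1) := by omega
      simp [h2, hA, ite_mul]
    · have hji : j ≠ i := fun h => h1 (by rw [h])
      rcases eq_or_ne (j:ℕ) ((i:ℕ)+1) with h2 | h2
      · simp [h1, h2, hji, hB, ite_mul]
      · simp [h1, h2, hji]
  rw [hsum, Finset.sum_add_distrib]
  congr 1
  · rw [Finset.sum_ite_eq' Finset.univ i (fun j => A * x j)]
    simp
  · by_cases h : (i:ℕ)+1 < 2*n
    · rw [dif_pos h]
      have hiff : ∀ j : Fin (2*n), ((j:ℕ) = (i:ℕ)+1) ↔ j = ⟨(i:ℕ)+1, h⟩ := by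
        intro j
        constructor
        · intro hj; exact Fin.ext hj
        · intro hj; subst hj; rfl
      simp only [hiff]
      rw [Finset.sum_ite_eq' Finset.univ (⟨(i:ℕ)+1, h⟩ : Fin (2*n)) (fun j => B * x j)]
      simp
    · rw [dif_neg h]
      refine Finset.sum_eq_zero fun j _ => ?_
      have hj := j.isLt
      have : ¬ ((j:ℕ) = (i:ℕ)+1) := by omega
      simp [this]

lemma key_lemma (n k : ℕ) (hn : 0 < n) (hk : 2 * n + 1 ≤ k)
    (u : Fin (2 * n) → ℤ)
    (hu : ∀ i, |(Mmat n k).mulVec (fun i' => (u i' : ℝ)) i| <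
      1 + min (((k : ℝ) - 2 * n) / (2 * n)) (1 / (2 * (n : ℝ) - 1))) :
    u = 0 := by
  set δ : ℝ := min (((k : ℝ) - 2 * n) / (2 * n)) (1 / (2 * (n : ℝ) - 1)) with hδdef
  have hnR : (1:ℝ) ≤ (n:ℝ) := by exact_mod_cast hn
  have hkR : 2*(n:ℝ) + 1 ≤ (k:ℝ) := by exact_mod_cast hk
  have h2n1 : (1:ℝ) ≤ 2 * (n:ℝ) - 1 := by linarith
  have hδ1 : δ ≤ 1 / (2 * (n:ℝ) - 1) := min_le_right _ _
  have hδle1 : δ ≤ 1 := le_trans hδ1 (by rw [div_le_one (by linarith)]; linarith)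
  -- Step 1 : downward bound |u i| ≤ 2n - i for i ≥ 1
  have hstep1 : ∀ d : ℕ, ∀ i : Fin (2*n), 2*n - (i:ℕ) ≤ d → 1 ≤ (i:ℕ) →
      |u i| ≤ (2*n : ℤ) - (i:ℕ) := by
    intro d
    induction d with
    | zero => intro i hid _; exact absurd hid (by have := i.isLt; omega)
    | succ d ih =>
      intro i hid hi1
      have hilt := i.isLt
      have hcube := hu i
      rw [mmat_mulVec_apply, if_neg (by omega : ¬ (i:ℕ) = 0)] at hcube
      by_cases hlast : (i:ℕ) + 1 < 2*n
      · rw [dif_pos hlast, if_neg (by omega : ¬ (i:ℕ) = 0)] at hcube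
        set m : ℝ := 2*(n:ℝ) - ((i:ℕ):ℝ) with hm
        have hm2 : (2:ℝ) ≤ m := by
          have h1 : (i:ℕ) + 2 ≤ 2*n := by omega
          have h2 : ((i:ℕ):ℝ) + 2 ≤ 2*(n:ℝ) := by exact_mod_cast h1
          rw [hm]; linarith
        have hmle : m ≤ 2*(n:ℝ) - 1 := by
          have h1 : (1:ℝ) ≤ ((i:ℕ):ℝ) := by exact_mod_cast hi1
          rw [hm]; linarith
        have hnext : |u ⟨(i:ℕ)+1, hlast⟩| ≤ (2*n : ℤ) - ((i:ℕ)+1) :=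
          ih ⟨(i:ℕ)+1, hlast⟩ (by simp; omega) (by simp)
        have hnextR : |(u ⟨(i:ℕ)+1, hlast⟩ : ℝ)| ≤ m - 1 := by
          have h1 : ((|u ⟨(i:ℕ)+1, hlast⟩| : ℤ) : ℝ) ≤ ((2*n : ℤ) - ((i:ℕ)+1) : ℤ) := by
            exact_mod_cast hnext
          rw [Int.cast_abs] at h1
          push_cast at h1
          rw [hm]; push_cast; linarith
        -- coefficient
        set r : ℝ := (2*(n:ℝ) - ((i:ℕ):ℝ) + 1)/(2*(n:ℝ) - ((i:ℕ):ℝ)) with hr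
        have hrm : r = (m+1)/m := by rw [hr, hm]
        have hrpos : 0 < r := by rw [hrm]; positivity
        have habs : |(u i : ℝ)| ≤ |1 * (u i : ℝ) + r * (u ⟨(i:ℕ)+1, hlast⟩ : ℝ)|
            + r * |(u ⟨(i:ℕ)+1, hlast⟩ : ℝ)| := by
          have h1 := abs_add_le (1 * (u i : ℝ) + r * (u ⟨(i:ℕ)+1, hlast⟩ : ℝ))
            (-(r * (u ⟨(i:ℕ)+1, hlast⟩ : ℝ)))
          rw [abs_neg, abs_mul, abs_of_pos hrpos] at h1
          have h2 : 1 * (u i : ℝ) + r * (u ⟨(i:ℕ)+1, hlast⟩ : ℝ)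
              + -(r * (u ⟨(i:ℕ)+1, hlast⟩ : ℝ)) = (u i : ℝ) := by ring
          rw [h2] at h1
          exact h1
        have hmul : r * |(u ⟨(i:ℕ)+1, hlast⟩ : ℝ)| ≤ (m+1)/m * (m-1) := by
          rw [hrm]
          apply mul_le_mul_of_nonneg_left hnextR (by positivity)
        have hcalc : (m+1)/m * (m-1) = m - 1/m := by
          field_simp
          ring
        have hdiv : 1/(2*(n:ℝ)-1) ≤ 1/m := by
          apply one_div_le_one_div_of_le (by linarith) hmle
        have hfin : |(u i : ℝ)| < m + 1 := by
          have := hcube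
          rw [hrm] at habs
          calc |(u i : ℝ)| ≤ |1 * (u i : ℝ) + (m+1)/m * (u ⟨(i:ℕ)+1, hlast⟩ : ℝ)|
              + (m+1)/m * |(u ⟨(i:ℕ)+1, hlast⟩ : ℝ)| := habs
          _ < (1 + δ) + ((m+1)/m * (m-1)) := by
              have h3 : |1 * (u i : ℝ) + (m+1)/m * (u ⟨(i:ℕ)+1, hlast⟩ : ℝ)| < 1 + δ := by
                rw [hrm] at hcube; exact hcube
              linarith [hmul]
          _ ≤ (1 + 1/(2*(n:ℝ)-1)) + (m - 1/m) := by rw [hcalc]; linarith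
          _ ≤ m + 1 := by linarith
        have hfinZ : |u i| < (2*n : ℤ) - (i:ℕ) + 1 := by
          have h1 : ((|u i| : ℤ) : ℝ) < ((2*n : ℤ) - (i:ℕ) + 1 : ℤ) := by
            rw [Int.cast_abs]
            push_cast
            rw [hm] at hfin
            push_cast at hfin
            linarith
          exact_mod_cast h1
        omega
      · -- last coordinate
        rw [dif_neg hlast] at hcube
        have h1 : |(u i : ℝ)| < 2 := by
          have h2 : |1 * (u i : ℝ) + 0| = |(u i : ℝ)| := by rw [one_mul, add_zero]
          rw [h2] at hcube
          linarith
        have h2 : |u i| < 2 := by exact_mod_cast h1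
        omega
  have hub : ∀ i : Fin (2*n), 1 ≤ (i:ℕ) → |u i| ≤ (2*n:ℤ) - (i:ℕ) :=
    fun i hi => hstep1 (2*n) i (by omega) hi
  -- indices 0 and 1
  have h02n : 0 < 2*n := by omega
  have h12n : 1 < 2*n := by omega
  set i0 : Fin (2*n) := ⟨0, h02n⟩ with hi0
  set i1 : Fin (2*n) := ⟨1, h12n⟩ with hi1
  -- Step 2 : 2n * u 0 + u 1 = 0
  have h0 := hu i0
  rw [mmat_mulVec_apply] at h0
  rw [if_pos rfl, dif_pos (show (i0:ℕ)+1 < 2*n from h12n), if_pos rfl] at h0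
  have hi0succ : (⟨(i0:ℕ)+1, h12n⟩ : Fin (2*n)) = i1 := rfl
  rw [hi0succ] at h0
  have h2npos : (0:ℝ) < 2*(n:ℝ) := by linarith
  have hkpos : (0:ℝ) < (k:ℝ)/(2*(n:ℝ)) := by
    apply div_pos (by linarith) h2npos
  have hδk : 1 + δ ≤ (k:ℝ)/(2*(n:ℝ)) := by
    have h1 : δ ≤ ((k:ℝ) - 2*n)/(2*n) := min_le_left _ _
    have h2 : 1 + ((k:ℝ)-2*(n:ℝ))/(2*(n:ℝ)) = (k:ℝ)/(2*(n:ℝ)) := by field_simp; ring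
    linarith
  set W : ℤ := 2*(n:ℤ)*(u i0) + u i1 with hW
  have hfac : (k:ℝ) * (u i0:ℝ) + (k:ℝ)/(2*(n:ℝ)) * (u i1:ℝ) = ((k:ℝ)/(2*(n:ℝ))) * (W:ℝ) := by
    rw [hW]
    push_cast
    field_simp
  have hWr : |(W:ℝ)| < 1 := by
    have h1 : ((k:ℝ)/(2*(n:ℝ))) * |(W:ℝ)| < 1 + δ := by
      rw [← abs_of_pos hkpos, ← abs_mul, ← hfac]
      exact h0
    by_contra hcon
    push_neg at hcon
    have h2 : (k:ℝ)/(2*(n:ℝ)) ≤ ((k:ℝ)/(2*(n:ℝ))) * |(W:ℝ)| := by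
      nlinarith
    linarith
  have hWz : W = 0 := by
    have h1 : |W| < 1 := by exact_mod_cast hWr
    exact Int.abs_lt_one_iff.mp h1
  -- Step 3 : u 0 = 0 and u 1 = 0
  have hu1bd : |u i1| ≤ (2*n:ℤ) - 1 := by
    have := hub i1 (by simp [hi1])
    simpa [hi1] using this
  have hu0 : u i0 = 0 := by
    by_contra hcon
    have h1 : 1 ≤ |u i0| := Int.one_le_abs (by omega)
    have h2 : u i1 = -(2*(n:ℤ) * u i0) := by linarith [hWz, hW]
    have h3 : |u i1| = 2*(n:ℤ) * |u i0| := by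
      rw [h2, abs_neg, abs_mul]
      congr 1
      rw [abs_of_nonneg]
      positivity
    have h4 : 2*(n:ℤ) ≤ 2*(n:ℤ) * |u i0| := by
      nlinarith
    have h5 : (1:ℤ) ≤ (n:ℤ) := by exact_mod_cast hn
    linarith
  have hu1 : u i1 = 0 := by
    have := hWz
    rw [hW, hu0] at this
    simpa using this
  -- Step 4 : forward zeros
  have hfwd : ∀ m : ℕ, ∀ i : Fin (2*n), (i:ℕ) = m → 1 ≤ (i:ℕ) → u i = 0 := by
    intro m
    induction m with
    | zero => intro i hi h1; omega
    | succ d ih =>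
      intro i hi _
      have hilt := i.isLt
      rcases Nat.eq_zero_or_pos d with hd | hd
      · have : i = i1 := Fin.ext (by simp [hi1, hi, hd])
        rw [this]; exact hu1
      · have hdlt : d < 2*n := by omega
        set ip : Fin (2*n) := ⟨d, hdlt⟩ with hip
        have hprev : u ip = 0 := ih ip rfl hd
        have hcube := hu ip
        rw [mmat_mulVec_apply, if_neg (show ¬ (ip:ℕ) = 0 by simp [hip]; omega)] at hcube
        have hsucclt : (ip:ℕ) + 1 < 2*n := by simp [hip]; omega
        rw [dif_pos hsucclt, if_neg (show ¬ (ip:ℕ) = 0 by simp [hip]; omega)] at hcube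
        have hieq : (⟨(ip:ℕ)+1, hsucclt⟩ : Fin (2*n)) = i := Fin.ext (by simp [hip, hi])
        rw [hieq, hprev] at hcube
        set m0 : ℝ := 2*(n:ℝ) - ((ip:ℕ):ℝ) with hm0
        have hm0ge : (1:ℝ) ≤ m0 := by
          have h1 : (ip:ℕ) + 1 ≤ 2*n := by omega
          have h2 : ((ip:ℕ):ℝ) + 1 ≤ 2*(n:ℝ) := by exact_mod_cast h1
          rw [hm0]; linarith
        have hm0le : m0 ≤ 2*(n:ℝ) - 1 := by
          have h1 : (1:ℝ) ≤ ((ip:ℕ):ℝ) := by exact_mod_cast hd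
          rw [hm0]; linarith
        have hr : (2*(n:ℝ) - ((ip:ℕ):ℝ) + 1)/(2*(n:ℝ) - ((ip:ℕ):ℝ)) = (m0+1)/m0 := by rw [hm0]
        rw [hr] at hcube
        have hm0pos : (0:ℝ) < (m0+1)/m0 := div_pos (by linarith) (by linarith)
        have hcube' : |((m0+1)/m0) * (u i : ℝ)| < 1 + δ := by
          have hz : (1:ℝ) * ((0:ℤ):ℝ) + (m0+1)/m0 * (u i:ℝ) = ((m0+1)/m0) * (u i:ℝ) := by
            push_cast; ring
          rwa [hz] at hcube
        have habs : (m0+1)/m0 * |(u i : ℝ)| < 1 + δ := by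
          rwa [abs_mul, abs_of_pos hm0pos] at hcube'
        have hrge : 1 + δ ≤ (m0+1)/m0 := by
          have h1 : 1/(2*(n:ℝ)-1) ≤ 1/m0 := one_div_le_one_div_of_le (by linarith) hm0le
          have h2 : (m0+1)/m0 = 1 + 1/m0 := by field_simp
          linarith
        have hlt : |(u i : ℝ)| < 1 := by
          by_contra hcon
          push_neg at hcon
          have : (m0+1)/m0 * 1 ≤ (m0+1)/m0 * |(u i : ℝ)| :=
            mul_le_mul_of_nonneg_left hcon (le_of_lt hm0pos)
          linarith
        have hltZ : |u i| < 1 := by exact_mod_cast hlt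
        exact Int.abs_lt_one_iff.mp hltZ
  funext i
  rcases Nat.eq_zero_or_pos (i:ℕ) with h | h
  · have : i = i0 := Fin.ext h
    rw [this]
    simpa using hu0
  · simpa using hfwd (i:ℕ) i rfl h

lemma coord_abs_le_dist {n : ℕ} (x y : E2n n) (i : Fin (2*n)) :
    |x i - y i| ≤ dist x y := by
  rw [EuclideanSpace.dist_eq]
  have h1 : |x i - y i| = Real.sqrt (dist (x i) (y i)^2) := by
    rw [Real.dist_eq, Real.sqrt_sq_eq_abs, abs_abs]
  rw [h1]
  apply Real.sqrt_le_sqrt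
  exact Finset.single_le_sum (f := fun i => dist (x i) (y i)^2)
    (fun _ _ => sq_nonneg _) (Finset.mem_univ i)

lemma cubeBase_apply (n k : ℕ) (j : Fin k) (v : Fin (2*n) → ℤ) (i : Fin (2*n)) :
    cubeBase n k j v i
      = (if (i:ℕ) = 0 then ((j:ℕ):ℝ) else 0) + (Mmat n k).mulVec (fun i' => (v i' : ℝ)) i := rfl

lemma cubeBase_add (n k : ℕ) (j : Fin k) (v u : Fin (2*n) → ℤ) (i : Fin (2*n)) :
    cubeBase n k j (v + u) i
      = cubeBase n k j v i + (Mmat n k).mulVec (fun i' => (u i' : ℝ)) i := by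
  rw [cubeBase_apply, cubeBase_apply]
  have h1 : (fun i' => (((v + u) i' : ℤ) : ℝ))
      = (fun i' => ((v i' : ℤ) : ℝ)) + (fun i' => ((u i' : ℤ) : ℝ)) := by
    funext i'
    simp [Pi.add_apply]
  rw [h1, Matrix.mulVec_add]
  simp [Pi.add_apply]
  ring

lemma cubeBase_sub (n k : ℕ) (j : Fin k) (v v' : Fin (2*n) → ℤ) (i : Fin (2*n)) :
    cubeBase n k j v' i - cubeBase n k j v i
      = (Mmat n k).mulVec (fun i' => (((v' - v) i' : ℤ) : ℝ)) i := by
  have h1 := cubeBase_add n k j v (v' - v) i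
  rw [add_sub_cancel] at h1
  rw [h1]
  ring

lemma mem_cubeAt_iff {n k : ℕ} {j : Fin k} {v : Fin (2*n) → ℤ} {x : E2n n} :
    x ∈ cubeAt n k j v ↔ ∀ i, x i - cubeBase n k j v i ∈ Set.Icc (0:ℝ) 1 := by
  constructor
  · rintro ⟨p, hp, rfl⟩ i
    have h1 : (cubeBase n k j v + p) i - cubeBase n k j v i = p i := by
      simp [PiLp.add_apply]
    rw [h1]
    exact hp i
  · intro h
    refine ⟨x - cubeBase n k j v, fun i => ?_, by module⟩
    simpa [PiLp.sub_apply] using h i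

lemma pair_exists (n k : ℕ) (hn : 0 < n) (hk : 2*n+1 ≤ k) (j : Fin k) (v : Fin (2*n) → ℤ)
    (u : Fin (2*n) → ℤ) (hu0 : u ≠ 0) (p q : Fin (2*n) → ℝ)
    (hp : ∀ i, p i ∈ Set.Icc (0:ℝ) 1) (hq : ∀ i, q i ∈ Set.Icc (0:ℝ) 1)
    (i0 : Fin (2*n)) (a : ℝ)
    (hcoord : ∀ i, (Mmat n k).mulVec (fun i' => (u i' : ℝ)) i + q i - p i
      = if i = i0 then a else 0) :
    ∃ x ∈ cubeAt n k j v, ∃ y ∈ frakC n k j \ cubeAt n k j v, dist x y = |a| := by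
  have hnR : (1:ℝ) ≤ n := by exact_mod_cast hn
  have hkR : 2*(n:ℝ)+1 ≤ k := by exact_mod_cast hk
  have hδpos : 0 < min (((k : ℝ) - 2 * n) / (2 * n)) (1 / (2 * (n : ℝ) - 1)) := by
    apply lt_min
    · apply div_pos <;> linarith
    · apply div_pos <;> linarith
  have hbig : ∃ i, 1 + min (((k : ℝ) - 2 * n) / (2 * n)) (1 / (2 * (n : ℝ) - 1))
      ≤ |(Mmat n k).mulVec (fun i' => (u i' : ℝ)) i| := by
    by_contra h
    push_neg at h
    exact hu0 (key_lemma n k hn hk u h)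
  set P : E2n n := (WithLp.equiv 2 _).symm p with hP
  set Q : E2n n := (WithLp.equiv 2 _).symm q with hQ
  have hPapp : ∀ i, P i = p i := fun i => rfl
  have hQapp : ∀ i, Q i = q i := fun i => rfl
  set x : E2n n := cubeBase n k j v + P with hx
  set y : E2n n := cubeBase n k j (v + u) + Q with hy
  have hxc : ∀ i, x i = cubeBase n k j v i + p i := by
    intro i
    rw [hx, PiLp.add_apply, hPapp]
  have hyc : ∀ i, y i = cubeBase n k j v i
      + (Mmat n k).mulVec (fun i' => (u i' : ℝ)) i + q i := by
    intro i
    rw [hy, PiLp.add_apply, cubeBase_add, hQapp]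
  have hxmem : x ∈ cubeAt n k j v := ⟨P, fun i => by rw [hPapp]; exact hp i, rfl⟩
  have hymem : y ∈ frakC n k j :=
    Set.mem_iUnion.mpr ⟨v + u, Q, fun i => by rw [hQapp]; exact hq i, rfl⟩
  have hynot : y ∉ cubeAt n k j v := by
    intro hmem
    obtain ⟨i, hi⟩ := hbig
    have h1 := (mem_cubeAt_iff.mp hmem) i
    have h2 : y i - cubeBase n k j v i
        = (Mmat n k).mulVec (fun i' => (u i' : ℝ)) i + q i := by
      rw [hyc i]; ring
    rw [h2] at h1
    obtain ⟨hql, hqr⟩ := hq i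
    obtain ⟨h2l, h2r⟩ := h1
    have h3 : |(Mmat n k).mulVec (fun i' => (u i' : ℝ)) i| ≤ 1 :=
      abs_le.mpr ⟨by linarith, by linarith⟩
    linarith
  refine ⟨x, hxmem, y, ⟨hymem, hynot⟩, ?_⟩
  have hxy : ∀ i, x i - y i = -(if i = i0 then a else 0) := by
    intro i
    rw [hxc i, hyc i, ← hcoord i]
    ring
  rw [dist_eq_norm, EuclideanSpace.norm_eq]
  have hsum : ∑ i, ‖(x - y) i‖^2 = ∑ i : Fin (2*n), (if i = i0 then a^2 else 0) := by
    refine Finset.sum_congr rfl fun i _ => ?_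
    rw [PiLp.sub_apply, hxy i]
    split_ifs <;> simp [Real.norm_eq_abs, sq_abs]
  rw [hsum, Finset.sum_ite_eq' Finset.univ i0 (fun _ => a^2),
    if_pos (Finset.mem_univ i0), Real.sqrt_sq_eq_abs]
/-- **Separation of cubes of the same colour.** In the dimension cover `𝔇(2n,k)` with
`k ≥ 2n+1`, for each colour `j` and each cube `C` of `𝔠^j(2n,k)`, the Euclidean distance
from `C` to `𝔠^j(2n,k) \ C` equals `δ = min{(k-2n)/(2n), 1/(2n-1)}`; in particular
distinct cubes of the same colour are at distance at least `δ > 0`. -/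
theorem same_colour_cubes_distance (n k : ℕ) (hn : 0 < n) (hk : 2 * n + 1 ≤ k) :
    0 < min (((k : ℝ) - 2 * n) / (2 * n)) (1 / (2 * (n : ℝ) - 1)) ∧
    ∀ (j : Fin k) (v : Fin (2 * n) → ℤ),
      setDist (cubeAt n k j v) (frakC n k j \ cubeAt n k j v) =
        min (((k : ℝ) - 2 * n) / (2 * n)) (1 / (2 * (n : ℝ) - 1)) := by
  have hnR : (1:ℝ) ≤ n := by exact_mod_cast hn
  have hkR : 2*(n:ℝ)+1 ≤ k := by exact_mod_cast hk
  have hδpos : 0 < min (((k : ℝ) - 2 * n) / (2 * n)) (1 / (2 * (n : ℝ) - 1)) := by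
    apply lt_min
    · apply div_pos <;> linarith
    · apply div_pos <;> linarith
  refine ⟨hδpos, fun j v => ?_⟩
  set δ : ℝ := min (((k : ℝ) - 2 * n) / (2 * n)) (1 / (2 * (n : ℝ) - 1)) with hδdef
  have hbig : ∀ u : Fin (2*n) → ℤ, u ≠ 0 →
      ∃ i, 1 + δ ≤ |(Mmat n k).mulVec (fun i' => (u i' : ℝ)) i| := by
    intro u hu0
    by_contra h
    push_neg at h
    exact hu0 (key_lemma n k hn hk u h)
  have hlow : ∀ x ∈ cubeAt n k j v, ∀ y ∈ frakC n k j \ cubeAt n k j v, δ ≤ dist x y := by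
    intro x hx y hy
    obtain ⟨hyC, hyv⟩ := hy
    obtain ⟨v', hyv'⟩ := Set.mem_iUnion.mp hyC
    have hune : (v' - v) ≠ 0 := by
      intro h
      apply hyv
      have hvv : v' = v := by
        funext i'
        have := congrFun h i'
        simpa [sub_eq_zero] using this
      rwa [hvv] at hyv'
    obtain ⟨i, hi⟩ := hbig (v' - v) hune
    have hxi := (mem_cubeAt_iff.mp hx) i
    have hyi := (mem_cubeAt_iff.mp hyv') i
    have hbase := cubeBase_sub n k j v v' i
    obtain ⟨ha1, ha2⟩ := hxi
    obtain ⟨hb1, hb2⟩ := hyi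
    have hd := coord_abs_le_dist x y i
    have hkey : |(Mmat n k).mulVec (fun i' => (((v' - v) i' : ℤ) : ℝ)) i| ≤ |x i - y i| + 1 := by
      have h1 : (Mmat n k).mulVec (fun i' => (((v' - v) i' : ℤ) : ℝ)) i
          = (y i - x i) + ((x i - cubeBase n k j v i) - (y i - cubeBase n k j v' i)) := by
        rw [← hbase]; ring
      rw [h1]
      have h2 := abs_add_le (y i - x i) ((x i - cubeBase n k j v i) - (y i - cubeBase n k j v' i))
      have h3 : |(x i - cubeBase n k j v i) - (y i - cubeBase n k j v' i)| ≤ 1 :=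
        abs_le.mpr ⟨by linarith, by linarith⟩
      have h4 : |y i - x i| = |x i - y i| := abs_sub_comm _ _
      linarith
    linarith
  have hup : ∃ x ∈ cubeAt n k j v, ∃ y ∈ frakC n k j \ cubeAt n k j v, dist x y = δ := by
    rcases le_total (((k : ℝ) - 2 * n) / (2 * n)) (1 / (2 * (n : ℝ) - 1)) with hcase | hcase
    · -- δ = (k-2n)/(2n), use u = e₁
      have hδeq : δ = ((k : ℝ) - 2 * n) / (2 * n) := min_eq_left hcase
      have h12n : 1 < 2*n := by omega
      have h02n : 0 < 2*n := by omega
      have hune : (fun i' : Fin (2*n) => if (i':ℕ) = 1 then (1:ℤ) else 0) ≠ 0 := by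
        intro h
        have h1 := congrFun h ⟨1, h12n⟩
        simp at h1
      have hpmem : ∀ i : Fin (2*n), (if (i:ℕ) ≤ 1 then (1:ℝ) else 0) ∈ Set.Icc (0:ℝ) 1 := by
        intro i
        split_ifs <;> norm_num
      have hqmem : ∀ i : Fin (2*n), (fun _ : Fin (2*n) => (0:ℝ)) i ∈ Set.Icc (0:ℝ) 1 :=
        fun _ => by norm_num
      have hcomp : ∀ i : Fin (2*n),
          (Mmat n k).mulVec (fun i' => ((if (i':ℕ) = 1 then (1:ℤ) else 0 : ℤ) : ℝ)) i
            + (fun _ : Fin (2*n) => (0:ℝ)) i - (fun i' : Fin (2*n) => if (i':ℕ) ≤ 1 then (1:ℝ) else 0) i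
          = if i = (⟨0, h02n⟩ : Fin (2*n)) then (k:ℝ)/(2*(n:ℝ)) - 1 else 0 := by
        intro i
        rw [mmat_mulVec_apply]
        by_cases h0 : (i:ℕ) = 0
        · have hd : (i:ℕ)+1 < 2*n := by omega
          rw [dif_pos hd]
          simp [h0, Fin.ext_iff]
        · by_cases h1 : (i:ℕ) = 1
          · by_cases h2 : (i:ℕ)+1 < 2*n
            · rw [dif_pos h2]
              simp [h0, h1, Fin.ext_iff, show ¬((i:ℕ)+1 = 1) by omega]
            · rw [dif_neg h2]
              simp [h0, h1, Fin.ext_iff]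
          · by_cases h2 : (i:ℕ)+1 < 2*n
            · rw [dif_pos h2]
              simp [h0, h1, Fin.ext_iff, show ¬((i:ℕ)+1 = 1) by omega,
                show ¬((i:ℕ) ≤ 1) by omega]
            · rw [dif_neg h2]
              simp [h0, h1, Fin.ext_iff, show ¬((i:ℕ) ≤ 1) by omega]
      obtain ⟨x, hx, y, hy, hxy⟩ := pair_exists n k hn hk j v _ hune _ _ hpmem hqmem
        ⟨0, h02n⟩ ((k:ℝ)/(2*(n:ℝ)) - 1) hcomp
      refine ⟨x, hx, y, hy, ?_⟩
      rw [hxy, abs_of_nonneg, hδeq]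
      · field_simp
      · rw [sub_nonneg, le_div_iff₀ (by linarith : (0:ℝ) < 2*(n:ℝ))]
        linarith
    · -- δ = 1/(2n-1)
      have hδeq : δ = 1 / (2 * (n : ℝ) - 1) := min_eq_right hcase
      have h12n : 1 < 2*n := by omega
      have h02n : 0 < 2*n := by omega
      have h2n1ne : (2*(n:ℝ) - 1) ≠ 0 := by linarith
      rcases Nat.lt_or_ge n 2 with hn2 | hn2
      · -- n = 1
        have hn1 : n = 1 := by omega
        have hn1R : (n:ℝ) = 1 := by rw [hn1]; norm_num
        have hune : (fun i' : Fin (2*n) => if (i':ℕ) = 0 then (1:ℤ) else -2) ≠ 0 := by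
          intro h
          have h1 := congrFun h ⟨0, h02n⟩
          simp at h1
        have hpmem : ∀ i : Fin (2*n), (fun _ : Fin (2*n) => (0:ℝ)) i ∈ Set.Icc (0:ℝ) 1 :=
          fun _ => by norm_num
        have hqmem : ∀ i : Fin (2*n), (if (i:ℕ) = 1 then (1:ℝ) else 0) ∈ Set.Icc (0:ℝ) 1 := by
          intro i
          split_ifs <;> norm_num
        have hcomp : ∀ i : Fin (2*n),
            (Mmat n k).mulVec (fun i' => ((if (i':ℕ) = 0 then (1:ℤ) else -2 : ℤ) : ℝ)) i
              + (fun i' : Fin (2*n) => if (i':ℕ) = 1 then (1:ℝ) else 0) i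
              - (fun _ : Fin (2*n) => (0:ℝ)) i
            = if i = (⟨1, h12n⟩ : Fin (2*n)) then (-1:ℝ) else 0 := by
          intro i
          rw [mmat_mulVec_apply]
          have hilt := i.isLt
          by_cases h0 : (i:ℕ) = 0
          · have hd : (i:ℕ)+1 < 2*n := by omega
            rw [dif_pos hd]
            have hne1 : ¬ ((i:ℕ) = 1) := by omega
            have hrhs : ¬ (i = (⟨1, h12n⟩ : Fin (2*n))) := by
              intro h; rw [Fin.ext_iff] at h; simp at h; omega
            rw [if_neg hrhs]
            simp only [h0, hne1, if_true, if_false, if_pos rfl]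
            norm_num
            rw [hn1R]
            ring
          · have h1 : (i:ℕ) = 1 := by omega
            have hd : ¬ ((i:ℕ)+1 < 2*n) := by omega
            rw [dif_neg hd]
            have hrhs : i = (⟨1, h12n⟩ : Fin (2*n)) := Fin.ext (by simp [h1])
            rw [if_pos hrhs]
            simp only [h0, h1, if_false, if_pos rfl, if_neg (by omega : ¬ (1:ℕ) = 0)]
            push_cast
            ring
        obtain ⟨x, hx, y, hy, hxy⟩ := pair_exists n k hn hk j v _ hune _ _ hpmem hqmem
          ⟨1, h12n⟩ (-1 : ℝ) hcomp
        refine ⟨x, hx, y, hy, ?_⟩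
        rw [hxy, hδeq, hn1R]
        norm_num
      · -- n ≥ 2
        have h22n : 2 < 2*n := by omega
        have hune : (fun i' : Fin (2*n) => if (i':ℕ) = 2 then (1:ℤ) else 0) ≠ 0 := by
          intro h
          have h1 := congrFun h ⟨2, h22n⟩
          simp at h1
        have hpmem : ∀ i : Fin (2*n),
            (if 1 ≤ (i:ℕ) ∧ (i:ℕ) ≤ 2 then (1:ℝ) else 0) ∈ Set.Icc (0:ℝ) 1 := by
          intro i
          split_ifs <;> norm_num
        have hqmem : ∀ i : Fin (2*n), (fun _ : Fin (2*n) => (0:ℝ)) i ∈ Set.Icc (0:ℝ) 1 :=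
          fun _ => by norm_num
        have hcomp : ∀ i : Fin (2*n),
            (Mmat n k).mulVec (fun i' => ((if (i':ℕ) = 2 then (1:ℤ) else 0 : ℤ) : ℝ)) i
              + (fun _ : Fin (2*n) => (0:ℝ)) i
              - (fun i' : Fin (2*n) => if 1 ≤ (i':ℕ) ∧ (i':ℕ) ≤ 2 then (1:ℝ) else 0) i
            = if i = (⟨1, h12n⟩ : Fin (2*n)) then 1/(2*(n:ℝ)-1) else 0 := by
          intro i
          rw [mmat_mulVec_apply]
          have hilt := i.isLt
          by_cases h0 : (i:ℕ) = 0
          · have hd : (i:ℕ)+1 < 2*n := by omega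
            rw [dif_pos hd]
            simp [h0, Fin.ext_iff, show ¬((i:ℕ)+1 = 2) by omega]
          · by_cases h1 : (i:ℕ) = 1
            · have hd : (i:ℕ)+1 < 2*n := by omega
              rw [dif_pos hd]
              have hval : ((⟨(i:ℕ)+1, hd⟩ : Fin (2*n)) : ℕ) = 2 := by simp [h1]
              rw [hval]
              have hrhs : i = (⟨1, h12n⟩ : Fin (2*n)) := Fin.ext (by simp [h1])
              rw [if_pos hrhs]
              simp only [h0, h1, if_false, if_pos rfl,
                if_pos (show 1 ≤ (i:ℕ) ∧ (i:ℕ) ≤ 2 by omega)]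
              norm_num
              field_simp
              ring
            · by_cases h2 : (i:ℕ) = 2
              · by_cases hd : (i:ℕ)+1 < 2*n
                · rw [dif_pos hd]
                  simp [h0, h1, h2, Fin.ext_iff, show ¬((i:ℕ)+1 = 2) by omega]
                · rw [dif_neg hd]
                  simp [h0, h1, h2, Fin.ext_iff]
              · by_cases hd : (i:ℕ)+1 < 2*n
                · rw [dif_pos hd]
                  simp [h0, h1, h2, Fin.ext_iff, show ¬((i:ℕ)+1 = 2) by omega,
                    show ¬(1 ≤ (i:ℕ) ∧ (i:ℕ) ≤ 2) by omega]
                · rw [dif_neg hd]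
                  simp [h0, h1, h2, Fin.ext_iff, show ¬(1 ≤ (i:ℕ) ∧ (i:ℕ) ≤ 2) by omega]
        obtain ⟨x, hx, y, hy, hxy⟩ := pair_exists n k hn hk j v _ hune _ _ hpmem hqmem
          ⟨1, h12n⟩ (1/(2*(n:ℝ)-1)) hcomp
        refine ⟨x, hx, y, hy, ?_⟩
        rw [hxy, hδeq]
        exact abs_of_nonneg (one_div_nonneg.mpr (by linarith))
  obtain ⟨x, hx, y, hy, hxy⟩ := hup
  have hmem : δ ∈ {d | ∃ a ∈ cubeAt n k j v, ∃ b ∈ frakC n k j \ cubeAt n k j v, d = dist a b} :=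
    ⟨x, hx, y, hy, hxy.symm⟩
  have hlb : ∀ d ∈ {d | ∃ a ∈ cubeAt n k j v, ∃ b ∈ frakC n k j \ cubeAt n k j v, d = dist a b},
      δ ≤ d := by
    rintro d ⟨a, ha, b, hb, rfl⟩
    exact hlow a ha b hb
  show setDist _ _ = δ
  unfold setDist
  exact le_antisymm (csInf_le ⟨δ, hlb⟩ hmem) (le_csInf ⟨δ, hmem⟩ hlb)

end
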